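/- Let n, d be positive integers. Then min over all nonempty subsets T of G = {a ∈ ℤ_{>0}^d : a_1 + ... + a_d = n⌈d/n⌉} of the quantity |I(T)| / (n·|T|) equals ⌈d/n⌉/d, where I(T) = {b ∈ ℤ_{>0}^d : b ≤ a componentwise for some a ∈ T}. -/

import Mathlib

/-- The down-set `I(T) = {b ∈ ℤ_{>0}^d : b ≤ a componentwise for some a ∈ T}`,
with `ℤ_{>0}^d` modeled as functions `Fin d → ℕ` with all values positive. -/
def posDown (d : ℕ) (T : Set (Fin d → ℕ)) : Set (Fin d → ℕ) :=
  {b | (∀ i, 0 < b i) ∧ ∃ a ∈ T, ∀ i, b i ≤ a i}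

open Finset

def lvl (d N : ℕ) : Finset (Fin d → ℕ) :=
  (Fintype.piFinset fun _ => Finset.range (N+1)).filter fun c => ∑ i, c i = N

lemma mem_lvl {d N : ℕ} {c : Fin d → ℕ} : c ∈ lvl d N ↔ ∑ i, c i = N := by
  simp only [lvl, Finset.mem_filter, Fintype.mem_piFinset, Finset.mem_range]
  constructor
  · tauto
  · intro h
    refine ⟨fun i => ?_, h⟩
    have : c i ≤ ∑ j, c j := Finset.single_le_sum (fun j _ => Nat.zero_le _) (Finset.mem_univ i)
    omega

def dlvl {d : ℕ} (T : Finset (Fin d → ℕ)) (i : ℕ) : Finset (Fin d → ℕ) :=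
  (lvl d i).filter fun c => ∃ a ∈ T, ∀ j, c j ≤ a j

lemma mem_dlvl {d : ℕ} {T : Finset (Fin d → ℕ)} {i : ℕ} {c : Fin d → ℕ} :
    c ∈ dlvl T i ↔ (∑ j, c j = i) ∧ ∃ a ∈ T, ∀ j, c j ≤ a j := by
  simp [dlvl, mem_lvl]


lemma dlvl_mono {d : ℕ} {T T' : Finset (Fin d → ℕ)} (h : ∀ a ∈ T, ∃ a' ∈ T', ∀ j, a j ≤ a' j)
    (i : ℕ) : dlvl T i ⊆ dlvl T' i := by
  intro c hc
  rw [mem_dlvl] at hc ⊢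
  obtain ⟨hs, a, ha, hca⟩ := hc
  obtain ⟨a', ha', haa'⟩ := h a ha
  exact ⟨hs, a', ha', fun j => (hca j).trans (haa' j)⟩

def vslice {d : ℕ} (T : Finset (Fin (d+1) → ℕ)) (k : ℕ) : Finset (Fin d → ℕ) :=
  (T.filter (fun a => k ≤ a (Fin.last d))).image Fin.init

lemma mem_vslice {d : ℕ} {T : Finset (Fin (d+1) → ℕ)} {k : ℕ} {x : Fin d → ℕ} :
    x ∈ vslice T k ↔ ∃ a ∈ T, k ≤ a (Fin.last d) ∧ Fin.init a = x := by
  simp [vslice, and_assoc]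

lemma fiber_card {d : ℕ} (T : Finset (Fin (d+1) → ℕ)) {j k : ℕ} (hk : k ≤ j) :
    ((dlvl T j).filter fun c => c (Fin.last d) = k).card = (dlvl (vslice T k) (j - k)).card := by
  apply Finset.card_bij (fun c _ => Fin.init c)
  · rintro c hc
    simp only [Finset.mem_filter] at hc
    obtain ⟨hc, hlast⟩ := hc
    rw [mem_dlvl] at hc ⊢
    obtain ⟨hs, a, ha, hca⟩ := hc
    constructor
    · have := Fin.sum_univ_castSucc (f := c)
      have hi : ∀ i : Fin d, Fin.init c i = c i.castSucc := fun i => rfl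
      simp only [hi]
      omega
    · refine ⟨Fin.init a, ?_, fun i => hca i.castSucc⟩
      rw [mem_vslice]
      exact ⟨a, ha, hlast ▸ hca (Fin.last d), rfl⟩
  · rintro c hc c' hc' h
    simp only [Finset.mem_filter] at hc hc'
    funext i
    refine Fin.lastCases ?_ (fun i => ?_) i
    · rw [hc.2, hc'.2]
    · exact congrFun h i
  · rintro x hx
    rw [mem_dlvl] at hx
    obtain ⟨hs, x', hx', hxx'⟩ := hx
    rw [mem_vslice] at hx'
    obtain ⟨a, ha, hka, hia⟩ := hx'
    refine ⟨Fin.snoc x k, ?_, ?_⟩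
    · simp only [Finset.mem_filter]
      refine ⟨?_, by simp⟩
      rw [mem_dlvl]
      constructor
      · rw [Fin.sum_univ_castSucc]
        simp only [Fin.snoc_castSucc, Fin.snoc_last]
        omega
      · refine ⟨a, ha, fun i => ?_⟩
        refine Fin.lastCases ?_ (fun i => ?_) i
        · simpa using hka
        · simp only [Fin.snoc_castSucc]
          exact (hxx' i).trans (by rw [← hia]; rfl)
    · simp [Fin.init_snoc]

lemma card_dlvl_succ {d : ℕ} (T : Finset (Fin (d+1) → ℕ)) (j : ℕ) :
    (dlvl T j).card = ∑ k ∈ Finset.range (j+1), (dlvl (vslice T k) (j - k)).card := by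
  rw [Finset.card_eq_sum_card_fiberwise (f := fun c => c (Fin.last d))
      (t := Finset.range (j+1))]
  · refine Finset.sum_congr rfl fun k hk => ?_
    exact fiber_card T (by simpa using Nat.lt_succ_iff.mp (Finset.mem_range.mp hk))
  · intro c hc
    rw [Finset.mem_coe, mem_dlvl] at hc
    have : c (Fin.last d) ≤ ∑ i, c i :=
      Finset.single_le_sum (fun i _ => Nat.zero_le _) (Finset.mem_univ _)
    simp only [Finset.mem_coe, Finset.mem_range]
    omega

lemma vslice_anti {d : ℕ} (T : Finset (Fin (d+1) → ℕ)) {k k' : ℕ} (h : k ≤ k') :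
    vslice T k' ⊆ vslice T k := by
  apply Finset.image_subset_image
  intro x hx
  simp only [Finset.mem_filter] at hx ⊢
  exact ⟨hx.1, by omega⟩

lemma lemA : ∀ (d : ℕ) (T : Finset (Fin d → ℕ)) (i : ℕ),
    (i+1) * (dlvl T (i+1)).card ≤ (d+i) * (dlvl T i).card := by
  intro d
  induction d with
  | zero =>
    intro T i
    have : dlvl T (i+1) = ∅ := by
      apply Finset.eq_empty_of_forall_notMem
      intro c hc
      rw [mem_dlvl] at hc
      simp at hc
    simp [this]
  | succ d IH =>
    intro T i
    set a : ℕ → ℕ := fun k => (dlvl (vslice T k) (i-k)).card with ha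
    set b : ℕ → ℕ := fun k => (dlvl (vslice T k) (i+1-k)).card with hb
    have hcard1 : (dlvl T (i+1)).card = ∑ k ∈ Finset.range (i+2), b k := card_dlvl_succ T (i+1)
    have hcard0 : (dlvl T i).card = ∑ k ∈ Finset.range (i+1), a k := card_dlvl_succ T i
    -- pointwise bounds
    have hIH : ∀ k ≤ i, (i+1-k) * b k ≤ (d+i-k) * a k := by
      intro k hk
      show (i+1-k) * (dlvl (vslice T k) (i+1-k)).card
          ≤ (d+i-k) * (dlvl (vslice T k) (i-k)).card
      have e1 : i + 1 - k = i - k + 1 := by omega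
      have e2 : d + i - k = d + (i - k) := by omega
      rw [e1, e2]
      exact IH (vslice T k) (i-k)
    have hnest : ∀ k, 1 ≤ k → b k ≤ a (k-1) := by
      intro k hk
      have hsub : dlvl (vslice T k) (i+1-k) ⊆ dlvl (vslice T (k-1)) (i+1-k) :=
        dlvl_mono (fun x hx => ⟨x, vslice_anti T (by omega) hx, fun j => le_refl _⟩) _
      have e : i + 1 - k = i - (k-1) := by omega
      calc b k ≤ (dlvl (vslice T (k-1)) (i+1-k)).card := Finset.card_le_card hsub
        _ = a (k-1) := by rw [ha]; simp only []; rw [e]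
    have hpt : ∀ k ≤ i, (i+1) * b k ≤ (d+i-k) * a k + k * a (k-1) := by
      intro k hk
      rcases Nat.eq_zero_or_pos k with h0 | h1
      · subst h0
        simpa using hIH 0 (by omega)
      · calc (i+1) * b k = ((i+1-k) + k) * b k := by congr 1; omega
          _ = (i+1-k) * b k + k * b k := by rw [Nat.add_mul]
          _ ≤ (d+i-k) * a k + k * a (k-1) :=
            Nat.add_le_add (hIH k hk) (Nat.mul_le_mul_left k (hnest k h1))
    have htop : b (i+1) ≤ a i := by
      have := hnest (i+1) (by omega)
      simpa using this
    -- assemble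
    rw [hcard1, hcard0]
    have hsplit : ∑ k ∈ Finset.range (i+2), b k
        = (∑ k ∈ Finset.range (i+1), b k) + b (i+1) := Finset.sum_range_succ b (i+1)
    rw [hsplit, Nat.mul_add, Finset.mul_sum]
    have step1 : ∑ k ∈ Finset.range (i+1), (i+1) * b k
        ≤ ∑ k ∈ Finset.range (i+1), ((d+i-k) * a k + k * a (k-1)) := by
      apply Finset.sum_le_sum
      intro k hk
      exact hpt k (by simpa using Nat.lt_succ_iff.mp (Finset.mem_range.mp hk))
    have step2 : ∑ k ∈ Finset.range (i+1), ((d+i-k) * a k + k * a (k-1))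
        = ∑ k ∈ Finset.range (i+1), (d+i-k) * a k + ∑ k ∈ Finset.range i, (k+1) * a k := by
      rw [Finset.sum_add_distrib]
      congr 1
      rw [Finset.sum_range_succ' (fun k => k * a (k-1)) i]
      simp
    have step3 : (i+1) * b (i+1) ≤ (i+1) * a i := Nat.mul_le_mul_left _ htop
    calc ∑ k ∈ Finset.range (i+1), (i+1) * b k + (i+1) * b (i+1)
        ≤ (∑ k ∈ Finset.range (i+1), (d+i-k) * a k + ∑ k ∈ Finset.range i, (k+1) * a k)
            + (i+1) * a i := by
          rw [← step2]; exact Nat.add_le_add step1 step3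
      _ = ∑ k ∈ Finset.range (i+1), (d+i-k) * a k
            + ∑ k ∈ Finset.range (i+1), (k+1) * a k := by
          rw [Nat.add_assoc]
          congr 1
          exact (Finset.sum_range_succ (fun k => (k+1) * a k) i).symm
      _ = ∑ k ∈ Finset.range (i+1), ((d+i-k) * a k + (k+1) * a k) := by
          rw [Finset.sum_add_distrib]
      _ ≤ ∑ k ∈ Finset.range (i+1), (d+1+i) * a k := by
          apply Finset.sum_le_sum
          intro k hk
          have hk' : k ≤ i := by simpa using Nat.lt_succ_iff.mp (Finset.mem_range.mp hk)
          have : d + i - k + (k+1) = d + 1 + i := by omega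
          rw [← Nat.add_mul, this]
      _ = (d+1+i) * ∑ k ∈ Finset.range (i+1), a k := by rw [Finset.mul_sum]

lemma card_lvl_slice {d : ℕ} (N : ℕ) :
    (lvl (d+1) N).card = ∑ k ∈ Finset.range (N+1), (lvl d (N-k)).card := by
  rw [Finset.card_eq_sum_card_fiberwise (f := fun c => c (Fin.last d))
      (t := Finset.range (N+1))]
  · refine Finset.sum_congr rfl fun k hk => ?_
    have hk' : k ≤ N := by simpa using Nat.lt_succ_iff.mp (Finset.mem_range.mp hk)
    apply Finset.card_bij (fun c _ => Fin.init c)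
    · rintro c hc
      simp only [Finset.mem_filter] at hc
      obtain ⟨hc, hlast⟩ := hc
      rw [mem_lvl] at hc ⊢
      have := Fin.sum_univ_castSucc (f := c)
      have hi : ∀ i : Fin d, Fin.init c i = c i.castSucc := fun i => rfl
      simp only [hi]
      omega
    · rintro c hc c' hc' h
      simp only [Finset.mem_filter] at hc hc'
      funext i
      refine Fin.lastCases ?_ (fun i => ?_) i
      · rw [hc.2, hc'.2]
      · exact congrFun h i
    · rintro x hx
      rw [mem_lvl] at hx
      refine ⟨Fin.snoc x k, ?_, by simp [Fin.init_snoc]⟩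
      simp only [Finset.mem_filter]
      refine ⟨?_, by simp⟩
      rw [mem_lvl, Fin.sum_univ_castSucc]
      simp only [Fin.snoc_castSucc, Fin.snoc_last]
      omega
  · intro c hc
    rw [Finset.mem_coe, mem_lvl] at hc
    have : c (Fin.last d) ≤ ∑ i, c i :=
      Finset.single_le_sum (fun i _ => Nat.zero_le _) (Finset.mem_univ _)
    simp only [Finset.mem_coe, Finset.mem_range]
    omega

lemma card_lvl : ∀ (d N : ℕ), (lvl (d+1) N).card = (d+N).choose N := by
  intro d
  induction d with
  | zero =>
    intro N
    have : lvl 1 N = {fun _ => N} := by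
      ext c
      rw [mem_lvl]
      simp only [Finset.mem_singleton]
      constructor
      · intro h
        funext i
        have : i = 0 := Subsingleton.elim _ _
        subst this
        simpa using h
      · intro h; subst h; simp
    simp [this]
  | succ d IH =>
    intro N
    rw [card_lvl_slice]
    have h1 : ∀ k ∈ Finset.range (N+1), (lvl (d+1) (N-k)).card = (d + (N-k)).choose (N-k) :=
      fun k _ => IH (N-k)
    rw [Finset.sum_congr rfl h1]
    rw [← Finset.sum_range_reflect]
    have h2 : ∀ j ∈ Finset.range (N+1),
        (d + (N - (N + 1 - 1 - j))).choose (N - (N + 1 - 1 - j)) = (d + j).choose d := by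
      intro j hj
      have hj' : j ≤ N := by simpa using Nat.lt_succ_iff.mp (Finset.mem_range.mp hj)
      have e : N - (N + 1 - 1 - j) = j := by omega
      rw [e]
      have := Nat.choose_symm (Nat.le_add_right d j)
      rwa [Nat.add_sub_cancel_left] at this
    rw [Finset.sum_congr rfl h2]
    have h3 : ∀ M : ℕ, ∑ j ∈ Finset.range (M+1), (d + j).choose d = (d+M+1).choose (d+1) := by
      intro M
      induction M with
      | zero => simp
      | succ M IHM =>
        rw [Finset.sum_range_succ, IHM]
        have : d + (M+1) + 1 = (d + M + 1) + 1 := by omega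
        rw [this, Nat.choose_succ_succ' (d+M+1) d]
        have e2 : d + (M + 1) = d + M + 1 := by omega
        rw [e2]
        omega
    rw [h3 N]
    have := Nat.choose_symm (Nat.le_add_left N (d+1))
    rw [Nat.add_sub_cancel] at this
    rw [show d + N + 1 = d + 1 + N by omega]
    exact this

lemma hockey (d : ℕ) : ∀ M : ℕ, ∑ j ∈ Finset.range (M+1), (d + j).choose d = (d+M+1).choose (d+1) := by
  intro M
  induction M with
  | zero => simp
  | succ M IHM =>
    rw [Finset.sum_range_succ, IHM]
    rw [show d + (M+1) + 1 = (d + M + 1) + 1 by omega, Nat.choose_succ_succ' (d+M+1) d]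
    rw [show d + (M + 1) = d + M + 1 by omega]
    omega

lemma choose_flip (d i : ℕ) : (d+i).choose i = (d+i).choose d := by
  have := Nat.choose_symm (Nat.le_add_right d i)
  rwa [Nat.add_sub_cancel_left] at this

lemma lemB (d : ℕ) (T : Finset (Fin (d+1) → ℕ)) (s : ℕ) :
    ∀ t i, i + t = s →
      (d+i).choose i * (dlvl T s).card ≤ (d+s).choose s * (dlvl T i).card := by
  intro t
  induction t with
  | zero =>
    intro i h
    have : i = s := by omega
    subst this
    exact le_refl _
  | succ t IHt =>
    intro i h
    have h1 := IHt (i+1) (by omega)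
    have h2 := lemA (d+1) T i
    refine Nat.le_of_mul_le_mul_left (c := d+1+i) ?_ (by omega)
    calc (d+1+i) * ((d+i).choose i * (dlvl T s).card)
        = ((d+i+1) * (d+i).choose i) * (dlvl T s).card := by ring
      _ = ((d+i+1).choose (i+1) * (i+1)) * (dlvl T s).card := by
          rw [Nat.add_one_mul_choose_eq]
      _ = (i+1) * ((d+(i+1)).choose (i+1) * (dlvl T s).card) := by
          rw [show d + (i+1) = d + i + 1 by omega]; ring
      _ ≤ (i+1) * ((d+s).choose s * (dlvl T (i+1)).card) := Nat.mul_le_mul_left _ h1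
      _ = (d+s).choose s * ((i+1) * (dlvl T (i+1)).card) := by ring
      _ ≤ (d+s).choose s * ((d+1+i) * (dlvl T i).card) := Nat.mul_le_mul_left _ h2
      _ = (d+1+i) * ((d+s).choose s * (dlvl T i).card) := by ring

lemma lemC (d : ℕ) (T : Finset (Fin (d+1) → ℕ)) (s : ℕ) :
    (d+s+1) * (dlvl T s).card ≤ (d+1) * ∑ i ∈ Finset.range (s+1), (dlvl T i).card := by
  have hsum : (d+s+1).choose (d+1) * (dlvl T s).card
      ≤ (d+s).choose s * ∑ i ∈ Finset.range (s+1), (dlvl T i).card := by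
    rw [← hockey d s, Finset.sum_mul, Finset.mul_sum]
    apply Finset.sum_le_sum
    intro i hi
    rw [← choose_flip d i]
    exact lemB d T s (s - i) i (by
      have : i ≤ s := by simpa using Nat.lt_succ_iff.mp (Finset.mem_range.mp hi)
      omega)
  have hpos : 0 < (d+s).choose d := Nat.choose_pos (Nat.le_add_right d s)
  refine Nat.le_of_mul_le_mul_left (c := (d+s).choose d) ?_ hpos
  calc (d+s).choose d * ((d+s+1) * (dlvl T s).card)
      = ((d+s+1) * (d+s).choose d) * (dlvl T s).card := by ring
    _ = ((d+s+1).choose (d+1) * (d+1)) * (dlvl T s).card := by rw [Nat.add_one_mul_choose_eq]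
    _ = (d+1) * ((d+s+1).choose (d+1) * (dlvl T s).card) := by ring
    _ ≤ (d+1) * ((d+s).choose s * ∑ i ∈ Finset.range (s+1), (dlvl T i).card) :=
        Nat.mul_le_mul_left _ hsum
    _ = (d+s).choose d * ((d+1) * ∑ i ∈ Finset.range (s+1), (dlvl T i).card) := by
        rw [choose_flip d s]; ring

def ddown {d : ℕ} (T : Finset (Fin d → ℕ)) (s : ℕ) : Finset (Fin d → ℕ) :=
  (Fintype.piFinset fun _ => Finset.range (s+1)).filter fun c => ∃ a ∈ T, ∀ j, c j ≤ a j

lemma mem_ddown {d s : ℕ} {T : Finset (Fin d → ℕ)} (hT : T ⊆ lvl d s) {c : Fin d → ℕ} :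
    c ∈ ddown T s ↔ ∃ a ∈ T, ∀ j, c j ≤ a j := by
  simp only [ddown, Finset.mem_filter, Fintype.mem_piFinset, Finset.mem_range]
  constructor
  · tauto
  · rintro ⟨a, ha, hca⟩
    refine ⟨fun i => ?_, a, ha, hca⟩
    have hs : ∑ j, a j = s := mem_lvl.mp (hT ha)
    have : a i ≤ ∑ j, a j := Finset.single_le_sum (fun j _ => Nat.zero_le _) (Finset.mem_univ i)
    have := hca i
    omega

lemma card_ddown {d s : ℕ} {T : Finset (Fin d → ℕ)} (hT : T ⊆ lvl d s) :
    (ddown T s).card = ∑ i ∈ Finset.range (s+1), (dlvl T i).card := by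
  rw [Finset.card_eq_sum_card_fiberwise (f := fun c => ∑ j, c j) (t := Finset.range (s+1))]
  · refine Finset.sum_congr rfl fun i _ => ?_
    congr 1
    ext c
    rw [Finset.mem_filter, mem_ddown hT, mem_dlvl]
    constructor
    · rintro ⟨⟨a, ha, hca⟩, hsum⟩
      exact ⟨hsum, a, ha, hca⟩
    · rintro ⟨hsum, a, ha, hca⟩
      exact ⟨⟨a, ha, hca⟩, hsum⟩
  · intro c hc
    rw [Finset.mem_coe, mem_ddown hT] at hc
    obtain ⟨a, ha, hca⟩ := hc
    have hs : ∑ j, a j = s := mem_lvl.mp (hT ha)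
    have : ∑ j, c j ≤ ∑ j, a j := Finset.sum_le_sum (fun j _ => hca j)
    simp only [Finset.mem_coe, Finset.mem_range]
    omega

lemma eq_of_le_of_sum_eq {d : ℕ} {c a : Fin d → ℕ} (h : ∀ j, c j ≤ a j)
    (hs : ∑ j, c j = ∑ j, a j) : c = a := by
  funext j
  by_contra hne
  have hlt : c j < a j := lt_of_le_of_ne (h j) hne
  have : ∑ j, c j < ∑ j, a j :=
    Finset.sum_lt_sum (fun i _ => h i) ⟨j, Finset.mem_univ j, hlt⟩
  omega

lemma dlvl_top {d s : ℕ} {T : Finset (Fin d → ℕ)} (hT : T ⊆ lvl d s) :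
    dlvl T s = T := by
  ext c
  rw [mem_dlvl]
  constructor
  · rintro ⟨hsum, a, ha, hca⟩
    have hs : ∑ j, a j = s := mem_lvl.mp (hT ha)
    have : c = a := eq_of_le_of_sum_eq hca (by omega)
    rwa [this]
  · intro hc
    exact ⟨mem_lvl.mp (hT hc), c, hc, fun j => le_refl _⟩

lemma dlvl_full {d s i : ℕ} (hi : i ≤ s) :
    dlvl (lvl (d+1) s) i = lvl (d+1) i := by
  ext c
  rw [mem_dlvl, mem_lvl]
  constructor
  · tauto
  · intro hc
    refine ⟨hc, Fin.cons (c 0 + (s - i)) (fun j => c j.succ), ?_, ?_⟩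
    · rw [mem_lvl, Fin.sum_univ_succ]
      simp only [Fin.cons_zero, Fin.cons_succ]
      rw [Fin.sum_univ_succ (f := c)] at hc
      omega
    · intro j
      refine Fin.cases ?_ (fun j => ?_) j
      · simp only [Fin.cons_zero]; omega
      · simp only [Fin.cons_succ]; exact le_refl _

/-- Main inequality, Finset form. -/
lemma main_ineq {d s : ℕ} {T : Finset (Fin (d+1) → ℕ)} (hT : T ⊆ lvl (d+1) s) :
    (d+s+1) * T.card ≤ (d+1) * (ddown T s).card := by
  have h := lemC d T s
  rw [dlvl_top hT] at h
  rw [card_ddown hT]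
  exact h

lemma sum_sub_one {d : ℕ} {a : Fin d → ℕ} (ha : ∀ i, 0 < a i) :
    ∑ j, (a j - 1) = (∑ j, a j) - d := by
  have h1 : ∑ j, (a j - 1) + ∑ _j : Fin d, 1 = ∑ j, a j := by
    rw [← Finset.sum_add_distrib]
    exact Finset.sum_congr rfl fun j _ => by have := ha j; omega
  have h2 : ∑ _j : Fin d, (1:ℕ) = d := by simp
  omega

lemma bridge {d N s : ℕ} (hs : N = d + s) (T : Set (Fin d → ℕ))
    (hsub : ∀ a ∈ T, (∀ i, 0 < a i) ∧ ∑ i, a i = N) (hfin : T.Finite) :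
    ∃ TF : Finset (Fin d → ℕ), TF ⊆ lvl d s ∧ TF.card = T.ncard ∧
      (ddown TF s).card = (posDown d T).ncard ∧ (T.Nonempty → TF.Nonempty) ∧
      (∀ c : Fin d → ℕ, (fun j => c j + 1) ∈ T → c ∈ TF) := by
  classical
  refine ⟨hfin.toFinset.image (fun a j => a j - 1), ?_, ?_, ?_, ?_, ?_⟩
  case refine_1 =>
    intro c hc
    rw [Finset.mem_image] at hc
    obtain ⟨a, ha, rfl⟩ := hc
    rw [Set.Finite.mem_toFinset] at ha
    obtain ⟨hpos, hsum⟩ := hsub a ha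
    rw [mem_lvl, sum_sub_one hpos, hsum]
    omega
  case refine_2 =>
    rw [Finset.card_image_of_injOn, (Set.ncard_eq_toFinset_card _ hfin).symm]
    intro a ha a' ha' h
    simp only [Finset.mem_coe, Set.Finite.mem_toFinset] at ha ha'
    funext j
    have h1 := (hsub a ha).1 j
    have h2 := (hsub a' ha').1 j
    have := congrFun h j
    simp only at this
    omega
  case refine_3 =>
    have hTF : (hfin.toFinset.image (fun a j => a j - 1)) ⊆ lvl d s := by
      intro c hc
      rw [Finset.mem_image] at hc
      obtain ⟨a, ha, rfl⟩ := hc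
      rw [Set.Finite.mem_toFinset] at ha
      obtain ⟨hpos, hsum⟩ := hsub a ha
      rw [mem_lvl, sum_sub_one hpos, hsum]
      omega
    have hset : posDown d T =
        ↑((ddown (hfin.toFinset.image (fun a j => a j - 1)) s).image (fun c j => c j + 1)) := by
      ext b
      simp only [Finset.coe_image, Set.mem_image, Finset.mem_coe]
      constructor
      · rintro ⟨hbpos, a, haT, hba⟩
        refine ⟨fun j => b j - 1, ?_, ?_⟩
        · rw [mem_ddown hTF]
          refine ⟨fun j => a j - 1, ?_, ?_⟩
          · rw [Finset.mem_image]
            exact ⟨a, Set.Finite.mem_toFinset hfin |>.mpr haT, rfl⟩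
          · intro j
            show b j - 1 ≤ a j - 1
            have := hba j
            omega
        · funext j
          have := hbpos j
          simp only
          omega
      · rintro ⟨c, hc, rfl⟩
        rw [mem_ddown hTF] at hc
        obtain ⟨a', ha', hca'⟩ := hc
        rw [Finset.mem_image] at ha'
        obtain ⟨a, haT, rfl⟩ := ha'
        rw [Set.Finite.mem_toFinset] at haT
        obtain ⟨hpos, hsum⟩ := hsub a haT
        refine ⟨fun j => Nat.succ_pos (c j), a, haT, fun j => ?_⟩
        have h3 : c j ≤ a j - 1 := hca' j
        have := hpos j
        show c j + 1 ≤ a j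
        omega
    rw [hset, Set.ncard_coe_finset, Finset.card_image_of_injective]
    intro c c' h
    funext j
    have := congrFun h j
    simp only at this
    omega
  case refine_4 =>
    rintro ⟨a, ha⟩
    exact ⟨_, Finset.mem_image_of_mem _ (Set.Finite.mem_toFinset hfin |>.mpr ha)⟩
  case refine_5 =>
    intro c hc
    rw [Finset.mem_image]
    refine ⟨fun j => c j + 1, Set.Finite.mem_toFinset hfin |>.mpr hc, ?_⟩
    funext j
    simp

lemma sum_add_one {d : ℕ} (c : Fin d → ℕ) : ∑ j, (c j + 1) = (∑ j, c j) + d := by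
  rw [Finset.sum_add_distrib]
  simp

/-- The dual F-signature of the Veronese subring `V_{n,d}`, combinatorially:
the minimum of `|I(T)| / (n·|T|)` over nonempty subsets `T` of
`G = {a ∈ ℤ_{>0}^d : Σ a_i = n⌈d/n⌉}` equals `⌈d/n⌉/d`. -/
theorem stmt12 (n d : ℕ) (hn : 0 < n) (hd : 0 < d) :
    IsLeast
      {q : ℚ | ∃ T : Set (Fin d → ℕ), T.Nonempty ∧
        T ⊆ {a : Fin d → ℕ | (∀ i, 0 < a i) ∧ ∑ i, a i = n * ((d + n - 1) / n)} ∧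
        q = ((posDown d T).ncard : ℚ) / ((n : ℚ) * (T.ncard : ℚ))}
      ((((d + n - 1) / n : ℕ) : ℚ) / (d : ℚ)) := by
  obtain ⟨e, rfl⟩ : ∃ e, d = e + 1 := ⟨d - 1, by omega⟩
  set m : ℕ := (e + 1 + n - 1) / n with hm
  set N : ℕ := n * m with hN
  have hNd : e + 1 ≤ N := by
    have h2 : (e + 1 + n - 1) % n < n := Nat.mod_lt (e + 1 + n - 1) hn
    have hmod : n * m + (e + 1 + n - 1) % n = e + 1 + n - 1 := by
      rw [hm]; exact Nat.div_add_mod (e + 1 + n - 1) n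
    rw [hN]
    omega
  set s : ℕ := N - (e + 1) with hs
  have hNs : N = (e + 1) + s := by omega
  set G : Set (Fin (e+1) → ℕ) :=
    {a : Fin (e+1) → ℕ | (∀ i, 0 < a i) ∧ ∑ i, a i = N} with hG
  have hGsub : ∀ a ∈ G, (∀ i, 0 < a i) ∧ ∑ i, a i = N := fun a ha => ha
  have hGfin : G.Finite :=
    Set.Finite.subset (lvl (e+1) N).finite_toSet (fun a ha => mem_lvl.mpr ha.2)
  -- choose pos facts
  have hBpos : 0 < (e+s).choose s := Nat.choose_pos (Nat.le_add_left s e)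
  constructor
  · -- membership : T = G
    obtain ⟨TF, hTFsub, hTFcard, hTFdd, _, hTFfull⟩ := bridge hNs G hGsub hGfin
    have hTFeq : TF = lvl (e+1) s := by
      apply Finset.Subset.antisymm hTFsub
      intro c hc
      apply hTFfull
      refine ⟨fun j => Nat.succ_pos _, ?_⟩
      rw [sum_add_one, mem_lvl.mp hc]
      omega
    -- G nonempty
    have hlvlpos : 0 < (lvl (e+1) s).card := by
      rw [card_lvl]
      exact Nat.choose_pos (Nat.le_add_left s e)
    obtain ⟨c0, hc0⟩ := Finset.card_pos.mp hlvlpos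
    have hGne : G.Nonempty := by
      refine ⟨fun j => c0 j + 1, fun j => Nat.succ_pos _, ?_⟩
      rw [sum_add_one, mem_lvl.mp hc0]
      omega
    -- cardinalities
    have hcardG : G.ncard = (e+s).choose s := by
      rw [← hTFcard, hTFeq, card_lvl]
    have hcardI : (posDown (e+1) G).ncard = (e+s+1).choose (e+1) := by
      rw [← hTFdd, hTFeq, card_ddown (Finset.Subset.refl _)]
      have h1 : ∀ i ∈ Finset.range (s+1), (dlvl (lvl (e+1) s) i).card = (e+i).choose e := by
        intro i hi
        have hi' : i ≤ s := by simpa using Nat.lt_succ_iff.mp (Finset.mem_range.mp hi)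
        rw [dlvl_full hi', card_lvl, choose_flip]
      rw [Finset.sum_congr rfl h1, hockey]
    refine ⟨G, hGne, fun a ha => ha, ?_⟩
    rw [hcardI, hcardG]
    have hkey : m * (n * (e+s).choose s) = (e+s+1).choose (e+1) * (e+1) := by
      calc m * (n * (e+s).choose s) = N * (e+s).choose s := by rw [hN]; ring
        _ = (e+s+1) * (e+s).choose e := by rw [hNs, choose_flip]; ring_nf
        _ = (e+s+1).choose (e+1) * (e+1) := Nat.add_one_mul_choose_eq (e+s) e
    rw [div_eq_div_iff (by positivity) (by positivity)]
    exact_mod_cast hkey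
  · -- lower bound
    rintro q ⟨T, hTne, hTsub, rfl⟩
    have hTsub' : ∀ a ∈ T, (∀ i, 0 < a i) ∧ ∑ i, a i = N := fun a ha => hTsub ha
    have hTfin : T.Finite := hGfin.subset hTsub
    obtain ⟨TF, hTFsub, hTFcard, hTFdd, hTFne, _⟩ := bridge hNs T hTsub' hTfin
    have hTFcard_pos : 0 < TF.card := Finset.card_pos.mpr (hTFne hTne)
    have hmain : N * TF.card ≤ (e+1) * (ddown TF s).card := by
      have h := main_ineq hTFsub
      have hNs' : e + s + 1 = N := by omega
      rwa [hNs'] at h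
    rw [← hTFcard, ← hTFdd]
    rw [div_le_div_iff₀ (by positivity) (mul_pos (by exact_mod_cast hn) (by exact_mod_cast hTFcard_pos))]
    have : m * (n * TF.card) = N * TF.card := by rw [hN]; ring
    calc (m : ℚ) * ((n : ℚ) * (TF.card : ℚ)) = ((N * TF.card : ℕ) : ℚ) := by
          push_cast [hN]; ring
      _ ≤ (((e+1) * (ddown TF s).card : ℕ) : ℚ) := by exact_mod_cast hmain
      _ = ((ddown TF s).card : ℚ) * ((e+1 : ℕ) : ℚ) := by push_cast; ring
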